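/- Let ψ : Ω → ℝ be C³ on an open set Ω ⊆ ℝ³ with ∇ψ(p) ≠ 0 and in particular ∂_zψ(p) ≠ 0 at a point p. Then the quantity ∇·(Δψ · ∇ψ/|∇ψ|²) − Δ log|∇ψ| evaluated at p equals 2/(|∇ψ|⁴ (∂_zψ)²) times the determinant of the 2×2 matrix M with entries M₁₁ = ∂_zψ(∂ₓ²ψ ∂_zψ − 2∂ₓψ ∂ₓ∂_zψ) + (∂ₓψ)² ∂_z²ψ, M₂₂ = ∂_zψ(∂ᵧ²ψ ∂_zψ − 2∂ᵧψ ∂ᵧ∂_zψ) + (∂ᵧψ)² ∂_z²ψ, and M₁₂ = M₂₁ = ∂_zψ(−∂ₓψ ∂ᵧ∂_zψ + ∂ₓ∂ᵧψ ∂_zψ − ∂ₓ∂_zψ ∂ᵧψ) + ∂ₓψ ∂ᵧψ ∂_z²ψ. -/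

import Mathlib

open Real Topology Filter

/-- Partial derivative along the `i`-th coordinate direction in `Fin d → ℝ`. -/
noncomputable def pd {d : ℕ} (i : Fin d) (f : (Fin d → ℝ) → ℝ) (x : Fin d → ℝ) : ℝ :=
  fderiv ℝ f x (Pi.single i 1)

/-- The flat Laplacian on `Fin d → ℝ`. -/
noncomputable def lap {d : ℕ} (f : (Fin d → ℝ) → ℝ) (x : Fin d → ℝ) : ℝ :=
  ∑ i, pd i (pd i f) x

variable {d : ℕ}

lemma pd_congr {i : Fin d} {f g : (Fin d → ℝ) → ℝ} {p : Fin d → ℝ}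
    (h : f =ᶠ[nhds p] g) : pd i f p = pd i g p := by
  unfold pd; rw [h.fderiv_eq]

lemma pd_cdAt {n : ℕ} {f : (Fin d → ℝ) → ℝ} {p : Fin d → ℝ}
    (h : ContDiffAt ℝ (n+1) f p) (i : Fin d) : ContDiffAt ℝ n (pd i f) p := by
  have h1 : ContDiffAt ℝ n (fderiv ℝ f) p := h.fderiv_right (by norm_cast)
  exact (ContinuousLinearMap.apply ℝ ℝ (Pi.single i 1 : Fin d → ℝ)).contDiff.contDiffAt.comp _ h1

lemma pd_comm {f : (Fin d → ℝ) → ℝ} {p : Fin d → ℝ}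
    (h : ContDiffAt ℝ 2 f p) (i j : Fin d) :
    pd i (pd j f) p = pd j (pd i f) p := by
  have hs := h.isSymmSndFDerivAt (by norm_num)
  have hd : DifferentiableAt ℝ (fderiv ℝ f) p :=
    (h.fderiv_right (n := 2) (m := 1) (by norm_num)).differentiableAt (by norm_num)
  have key : ∀ i j : Fin d,
      pd i (pd j f) p = fderiv ℝ (fderiv ℝ f) p (Pi.single i 1) (Pi.single j 1) := by
    intro i j
    unfold pd
    rw [show (fun y => fderiv ℝ f y (Pi.single j 1)) =
        (fun y => (fderiv ℝ f y) ((fun _ => (Pi.single j 1 : Fin d → ℝ)) y)) from rfl,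
      fderiv_clm_apply hd (differentiableAt_const _)]
    simp
  rw [key, key, hs]

lemma pd_add {f g : (Fin d → ℝ) → ℝ} {p : Fin d → ℝ}
    (hf : DifferentiableAt ℝ f p) (hg : DifferentiableAt ℝ g p) (i : Fin d) :
    pd i (fun y => f y + g y) p = pd i f p + pd i g p := by
  unfold pd; rw [fderiv_fun_add hf hg]; rfl

lemma pd_sum {ι : Type*} {u : Finset ι} {F : ι → (Fin d → ℝ) → ℝ} {p : Fin d → ℝ}
    (h : ∀ j ∈ u, DifferentiableAt ℝ (F j) p) (i : Fin d) :
    pd i (fun y => ∑ j ∈ u, F j y) p = ∑ j ∈ u, pd i (F j) p := by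
  unfold pd; rw [fderiv_fun_sum h]; simp

lemma pd_mul {f g : (Fin d → ℝ) → ℝ} {p : Fin d → ℝ}
    (hf : DifferentiableAt ℝ f p) (hg : DifferentiableAt ℝ g p) (i : Fin d) :
    pd i (fun y => f y * g y) p = pd i f p * g p + f p * pd i g p := by
  unfold pd; rw [fderiv_fun_mul hf hg]; simp [mul_comm]; ring

lemma pd_inv {f : (Fin d → ℝ) → ℝ} {p : Fin d → ℝ}
    (hf : DifferentiableAt ℝ f p) (h0 : f p ≠ 0) (i : Fin d) :
    pd i (fun y => (f y)⁻¹) p = -pd i f p / f p ^ 2 := by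
  unfold pd
  have h := ((hasFDerivAt_inv' (𝕜 := ℝ) h0).comp p hf.hasFDerivAt).fderiv
  rw [show (fun y => (f y)⁻¹) = Inv.inv ∘ f from rfl, h]
  simp [ContinuousLinearMap.mulLeftRight_apply]
  field_simp

lemma pd_div {f g : (Fin d → ℝ) → ℝ} {p : Fin d → ℝ}
    (hf : DifferentiableAt ℝ f p) (hg : DifferentiableAt ℝ g p) (hg0 : g p ≠ 0) (i : Fin d) :
    pd i (fun y => f y / g y) p = (g p * pd i f p - f p * pd i g p) / g p ^ 2 := by
  have h1 : (fun y => f y / g y) = fun y => f y * (g y)⁻¹ := by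
    funext y; rw [div_eq_mul_inv]
  rw [h1, pd_mul (g := fun y => (g y)⁻¹) hf (hg.inv hg0), pd_inv hg hg0]
  field_simp
  ring

lemma pd_sq {f : (Fin d → ℝ) → ℝ} {p : Fin d → ℝ}
    (hf : DifferentiableAt ℝ f p) (i : Fin d) :
    pd i (fun y => f y ^ 2) p = 2 * f p * pd i f p := by
  have : (fun y => f y ^ 2) = fun y => f y * f y := by funext y; ring
  rw [this, pd_mul hf hf]; ring

lemma pd_log {f : (Fin d → ℝ) → ℝ} {p : Fin d → ℝ}
    (hf : DifferentiableAt ℝ f p) (h0 : f p ≠ 0) (i : Fin d) :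
    pd i (fun y => Real.log (f y)) p = pd i f p / f p := by
  unfold pd
  rw [(hf.hasFDerivAt.log h0).fderiv]
  simp [div_eq_inv_mul]

lemma pd_const_mul {f : (Fin d → ℝ) → ℝ} {p : Fin d → ℝ} (c : ℝ)
    (hf : DifferentiableAt ℝ f p) (i : Fin d) :
    pd i (fun y => c * f y) p = c * pd i f p := by
  unfold pd; rw [fderiv_const_mul hf]; simp

lemma pd_div_const {f : (Fin d → ℝ) → ℝ} {p : Fin d → ℝ}
    (hf : DifferentiableAt ℝ f p) (c : ℝ) (i : Fin d) :
    pd i (fun y => f y / c) p = pd i f p / c := by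
  have h : (fun y => f y / c) = fun y => c⁻¹ * f y := by
    funext y; rw [div_eq_inv_mul]
  rw [h, pd_const_mul c⁻¹ hf, div_eq_inv_mul]

theorem implicit_surface_gauss_curvature
    (Ω : Set (Fin 3 → ℝ)) (hΩ : IsOpen Ω)
    (ψ : (Fin 3 → ℝ) → ℝ) (hψ : ContDiffOn ℝ 3 ψ Ω)
    (p : Fin 3 → ℝ) (hp : p ∈ Ω) (hz : pd 2 ψ p ≠ 0) :
    (∑ i, pd i (fun y => lap ψ y * pd i ψ y / (∑ j, (pd j ψ y) ^ 2)) p) -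
        lap (fun y => Real.log (Real.sqrt (∑ j, (pd j ψ y) ^ 2))) p =
      2 / ((∑ j, (pd j ψ p) ^ 2) ^ 2 * (pd 2 ψ p) ^ 2) *
        ((pd 2 ψ p * (pd 0 (pd 0 ψ) p * pd 2 ψ p -
              2 * pd 0 ψ p * pd 0 (pd 2 ψ) p) +
            (pd 0 ψ p) ^ 2 * pd 2 (pd 2 ψ) p) *
          (pd 2 ψ p * (pd 1 (pd 1 ψ) p * pd 2 ψ p -
              2 * pd 1 ψ p * pd 1 (pd 2 ψ) p) +
            (pd 1 ψ p) ^ 2 * pd 2 (pd 2 ψ) p) -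
          (pd 2 ψ p * (-(pd 0 ψ p) * pd 1 (pd 2 ψ) p +
              pd 0 (pd 1 ψ) p * pd 2 ψ p - pd 0 (pd 2 ψ) p * pd 1 ψ p) +
            pd 0 ψ p * pd 1 ψ p * pd 2 (pd 2 ψ) p) ^ 2) := by
  have hΩn : Ω ∈ 𝓝 p := hΩ.mem_nhds hp
  have hc3 : ∀ y ∈ Ω, ContDiffAt ℝ 3 ψ y := fun y hy => hψ.contDiffAt (hΩ.mem_nhds hy)
  have hc2 : ∀ (i : Fin 3), ∀ y ∈ Ω, ContDiffAt ℝ 2 (pd i ψ) y := by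
    intro i y hy
    have := pd_cdAt (n := 2) (by exact_mod_cast hc3 y hy) i
    exact_mod_cast this
  have hc1 : ∀ (i j : Fin 3), ∀ y ∈ Ω, ContDiffAt ℝ 1 (pd i (pd j ψ)) y := by
    intro i j y hy
    have := pd_cdAt (n := 1) (by exact_mod_cast hc2 j y hy) i
    exact_mod_cast this
  have hd1 : ∀ (j : Fin 3), ∀ y ∈ Ω, DifferentiableAt ℝ (pd j ψ) y := fun j y hy =>
    (hc2 j y hy).differentiableAt (by norm_num)
  have hd2 : ∀ (i j : Fin 3), ∀ y ∈ Ω, DifferentiableAt ℝ (pd i (pd j ψ)) y := fun i j y hy =>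
    (hc1 i j y hy).differentiableAt (by norm_num)
  have hdg : ∀ y ∈ Ω, DifferentiableAt ℝ (fun z => ∑ j, (pd j ψ z) ^ 2) y := fun y hy =>
    DifferentiableAt.fun_sum (fun j _ => (hd1 j y hy).pow 2)
  have hdlap : ∀ y ∈ Ω, DifferentiableAt ℝ (lap ψ) y := by
    intro y hy
    have : DifferentiableAt ℝ (fun z => ∑ i, pd i (pd i ψ) z) y :=
      DifferentiableAt.fun_sum fun i _ => hd2 i i y hy
    exact this
  have hgpos : (0:ℝ) < ∑ j, (pd j ψ p) ^ 2 := by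
    have h1 : (0:ℝ) < (pd 2 ψ p) ^ 2 := by positivity
    have h2 : (pd 2 ψ p) ^ 2 ≤ ∑ j, (pd j ψ p) ^ 2 :=
      Finset.single_le_sum (f := fun j => (pd j ψ p) ^ 2) (fun j _ => sq_nonneg _)
        (Finset.mem_univ 2)
    linarith
  have hgne : (∑ j, (pd j ψ p) ^ 2) ≠ 0 := ne_of_gt hgpos
  -- derivative of g on Ω
  have hpdg : ∀ (i : Fin 3), ∀ y ∈ Ω, pd i (fun z => ∑ j, (pd j ψ z) ^ 2) y =
      ∑ j, 2 * pd j ψ y * pd i (pd j ψ) y := by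
    intro i y hy
    rw [pd_sum (fun j _ => (hd1 j y hy).fun_pow 2)]
    exact Finset.sum_congr rfl fun j _ => by
      rw [pd_sq (hd1 j y hy)]
  -- derivative of lap at p
  have hpdlap : ∀ i : Fin 3, pd i (lap ψ) p = ∑ j, pd i (pd j (pd j ψ)) p := by
    intro i
    have : lap ψ = fun y => ∑ j, pd j (pd j ψ) y := rfl
    rw [this, pd_sum (fun j _ => hd2 j j p hp)]
  -- Term A
  have hA : ∀ i : Fin 3, pd i (fun y => lap ψ y * pd i ψ y / (∑ j, (pd j ψ y) ^ 2)) p =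
      ((∑ j, (pd j ψ p) ^ 2) *
          ((∑ j, pd i (pd j (pd j ψ)) p) * pd i ψ p + lap ψ p * pd i (pd i ψ) p) -
        lap ψ p * pd i ψ p * (∑ j, 2 * pd j ψ p * pd i (pd j ψ) p)) /
        (∑ j, (pd j ψ p) ^ 2) ^ 2 := by
    intro i
    rw [pd_div ((hdlap p hp).fun_mul (hd1 i p hp)) (hdg p hp) hgne,
      pd_mul (hdlap p hp) (hd1 i p hp), hpdg i p hp, hpdlap i]
  -- Term B
  have hlogsqrt : (fun y => Real.log (Real.sqrt (∑ j, (pd j ψ y) ^ 2))) =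
      fun y => Real.log (∑ j, (pd j ψ y) ^ 2) / 2 := by
    funext y
    rw [Real.log_sqrt (by positivity)]
  have hgev : ∀ᶠ y in 𝓝 p, (∑ j, (pd j ψ y) ^ 2) ≠ 0 :=
    (hdg p hp).continuousAt.eventually_ne hgne
  have hBinner : ∀ i : Fin 3,
      (pd i (fun y => Real.log (∑ j, (pd j ψ y) ^ 2) / 2)) =ᶠ[𝓝 p]
      (fun y => (∑ j, 2 * pd j ψ y * pd i (pd j ψ) y) / (2 * ∑ j, (pd j ψ y) ^ 2)) := by
    intro i
    filter_upwards [hΩn, hgev] with y hy hgy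
    rw [pd_div_const ((hdg y hy).log hgy) 2, pd_log (hdg y hy) hgy, hpdg i y hy,
      div_div, mul_comm (∑ j, (pd j ψ y) ^ 2) 2]
  have hdφ : ∀ (i : Fin 3),
      DifferentiableAt ℝ (fun y => ∑ j, 2 * pd j ψ y * pd i (pd j ψ) y) p := fun i =>
    DifferentiableAt.fun_sum fun j _ =>
      (((differentiableAt_const (2:ℝ)).mul (hd1 j p hp)).mul (hd2 i j p hp))
  have hpdφ : ∀ i : Fin 3, pd i (fun y => ∑ j, 2 * pd j ψ y * pd i (pd j ψ) y) p =
      ∑ j, ((2 * pd i (pd j ψ) p) * pd i (pd j ψ) p +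
        2 * pd j ψ p * pd i (pd i (pd j ψ)) p) := by
    intro i
    rw [pd_sum (fun j _ =>
      (((differentiableAt_const (2:ℝ)).fun_mul (hd1 j p hp)).fun_mul (hd2 i j p hp)))]
    refine Finset.sum_congr rfl fun j _ => ?_
    rw [pd_mul ((differentiableAt_const (2:ℝ)).fun_mul (hd1 j p hp)) (hd2 i j p hp),
      pd_const_mul 2 (hd1 j p hp)]
  have hd2g : DifferentiableAt ℝ (fun y => 2 * ∑ j, (pd j ψ y) ^ 2) p :=
    (differentiableAt_const (2:ℝ)).mul (hdg p hp)
  have h2gne : (2 * ∑ j, (pd j ψ p) ^ 2) ≠ 0 := by positivity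
  have hB : ∀ i : Fin 3, pd i (pd i (fun y => Real.log (∑ j, (pd j ψ y) ^ 2) / 2)) p =
      ((2 * ∑ j, (pd j ψ p) ^ 2) *
          (∑ j, ((2 * pd i (pd j ψ) p) * pd i (pd j ψ) p +
            2 * pd j ψ p * pd i (pd i (pd j ψ)) p)) -
        (∑ j, 2 * pd j ψ p * pd i (pd j ψ) p) *
          (2 * (∑ j, 2 * pd j ψ p * pd i (pd j ψ) p))) /
        (2 * ∑ j, (pd j ψ p) ^ 2) ^ 2 := by
    intro i
    rw [pd_congr (hBinner i),
      pd_div (hdφ i) hd2g h2gne, hpdφ i, pd_const_mul 2 (hdg p hp), hpdg i p hp]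
  -- symmetry facts
  have hb : ∀ i j : Fin 3, pd i (pd j ψ) p = pd j (pd i ψ) p := fun i j =>
    pd_comm ((hc3 p hp).of_le (by norm_num)) i j
  have h3out : ∀ i j k : Fin 3, pd i (pd j (pd k ψ)) p = pd j (pd i (pd k ψ)) p :=
    fun i j k => pd_comm (hc2 k p hp) i j
  have h3in : ∀ i j k : Fin 3, pd i (pd j (pd k ψ)) p = pd i (pd k (pd j ψ)) p := by
    intro i j k
    refine pd_congr ?_
    filter_upwards [hΩn] with y hy
    exact pd_comm ((hc3 y hy).of_le (by norm_num)) j k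
  -- rewrite goal
  rw [hlogsqrt]
  have hlapB : lap (fun y => Real.log (∑ j, (pd j ψ y) ^ 2) / 2) p =
      ∑ i, pd i (pd i (fun y => Real.log (∑ j, (pd j ψ y) ^ 2) / 2)) p := rfl
  rw [hlapB]
  rw [Fin.sum_univ_three, Fin.sum_univ_three (f := fun i =>
    pd i (pd i (fun y => Real.log (∑ j, (pd j ψ y) ^ 2) / 2)) p)]
  rw [hA 0, hA 1, hA 2, hB 0, hB 1, hB 2]
  have hlapval : lap ψ p = pd 0 (pd 0 ψ) p + pd 1 (pd 1 ψ) p + pd 2 (pd 2 ψ) p := by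
    show (∑ i, pd i (pd i ψ) p) = _
    rw [Fin.sum_univ_three]
  simp only [Fin.sum_univ_three, hlapval]
  -- canonicalize third derivatives
  rw [show pd 1 (pd 0 (pd 0 ψ)) p = pd 0 (pd 0 (pd 1 ψ)) p from
      (h3out 1 0 0).trans (h3in 0 1 0),
    show pd 2 (pd 0 (pd 0 ψ)) p = pd 0 (pd 0 (pd 2 ψ)) p from
      (h3out 2 0 0).trans (h3in 0 2 0),
    show pd 2 (pd 1 (pd 1 ψ)) p = pd 1 (pd 1 (pd 2 ψ)) p from
      (h3out 2 1 1).trans (h3in 1 2 1),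
    show pd 1 (pd 1 (pd 0 ψ)) p = pd 0 (pd 1 (pd 1 ψ)) p from
      (h3in 1 1 0).trans (h3out 1 0 1),
    show pd 2 (pd 2 (pd 0 ψ)) p = pd 0 (pd 2 (pd 2 ψ)) p from
      (h3in 2 2 0).trans (h3out 2 0 2),
    show pd 2 (pd 2 (pd 1 ψ)) p = pd 1 (pd 2 (pd 2 ψ)) p from
      (h3in 2 2 1).trans (h3out 2 1 2)]
  -- canonicalize second derivatives
  rw [hb 1 0, hb 2 0, hb 2 1]
  have hG : (pd 0 ψ p ^ 2 + pd 1 ψ p ^ 2 + pd 2 ψ p ^ 2) ≠ 0 := by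
    have := hgne; rwa [Fin.sum_univ_three] at this
  field_simp
  ring
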